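/- For all positive integers a, n, t there exists an (a,n,t)-perfect necklace. -/

import Mathlib

namespace PN

variable {E V : Type} [Fintype E] [DecidableEq E] [DecidableEq V]

section
variable (src tgt : E → V)

/-- step relation -/
def Step (u w : V) : Prop := ∃ e, src e = u ∧ tgt e = w

/-- cyclic trail condition -/
def CT (c : List E) : Prop :=
  c.Nodup ∧ ∀ (i j : ℕ) (hi : i < c.length) (hj : j < c.length),
    j = (i + 1) % c.length → tgt (c.get ⟨i, hi⟩) = src (c.get ⟨j, hj⟩)

theorem count_key (l : List E) (h : l.Chain' (fun e f => tgt e = src f)) (hne : l ≠ []) (v : V) :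
    l.countP (fun e => decide (tgt e = v)) + (if src (l.head hne) = v then 1 else 0)
    = l.countP (fun e => decide (src e = v)) + (if tgt (l.getLast hne) = v then 1 else 0) := by
  induction l with
  | nil => exact absurd rfl hne
  | cons e l' ih =>
    cases l' with
    | nil => simp [List.countP_cons]; by_cases h1 : src e = v <;> by_cases h2 : tgt e = v <;> simp [h1, h2]
    | cons f l'' =>
      have h1 : tgt e = src f := (List.isChain_cons_cons.mp h).1
      have h2 := ih (List.isChain_cons_cons.mp h).2 (by simp)
      simp only [List.countP_cons, decide_eq_true_eq, List.head_cons,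
        List.getLast_cons (by simp : f :: l'' ≠ [])] at h2 ⊢
      have he : (if tgt e = v then 1 else 0) = (if src f = v then 1 else 0) := by rw [h1]
      by_cases h3 : src e = v <;> by_cases h4 : tgt e = v <;> by_cases h5 : src f = v <;>
        by_cases h6 : tgt f = v <;> simp only [h3, h4, h5, h6, ↓reduceIte] at h2 he ⊢ <;> omega


theorem countP_le (l : List E) (hl : l.Nodup) (F : Finset E) (hsub : ∀ e ∈ l, e ∈ F)
    (p : E → Prop) [DecidablePred p] :
    l.countP (fun e => decide (p e)) ≤ (F.filter p).card := by
  rw [List.countP_eq_length_filter]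
  have h1 : (l.filter (fun e => decide (p e))).toFinset.card
      = (l.filter (fun e => decide (p e))).length :=
    List.toFinset_card_of_nodup (hl.filter _)
  rw [← h1]
  apply Finset.card_le_card
  intro e he
  simp only [List.mem_toFinset, List.mem_filter, decide_eq_true_eq] at he
  exact Finset.mem_filter.mpr ⟨hsub e he.1, he.2⟩

theorem card_le_countP (l : List E) (F : Finset E) (p : E → Prop) [DecidablePred p]
    (hsub : ∀ e ∈ F, p e → e ∈ l) :
    (F.filter p).card ≤ l.countP (fun e => decide (p e)) := by
  rw [List.countP_eq_length_filter]
  calc (F.filter p).card ≤ (l.filter (fun e => decide (p e))).toFinset.card := by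
        apply Finset.card_le_card
        intro e he
        rw [Finset.mem_filter] at he
        simp only [List.mem_toFinset, List.mem_filter, decide_eq_true_eq]
        exact ⟨hsub e he.1 he.2, he.2⟩
    _ ≤ (l.filter (fun e => decide (p e))).length := (l.filter _).toFinset_card_le

theorem exists_closed_from (F : Finset E)
    (hbal : ∀ v, (F.filter (fun e => src e = v)).card = (F.filter (fun e => tgt e = v)).card)
    (x : V) (e₀ : E) (he₀ : e₀ ∈ F) (hsrc : src e₀ = x) :
    ∃ (c : List E) (hc : c ≠ []), c.Nodup ∧ c.Chain' (fun e f => tgt e = src f) ∧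
      (∀ e ∈ c, e ∈ F) ∧ src (c.head hc) = x ∧ tgt (c.getLast hc) = x := by
  classical
  set P : ℕ → Prop := fun m => ∃ (c : List E) (hc : c ≠ []), c.Nodup ∧
    c.Chain' (fun e f => tgt e = src f) ∧ (∀ e ∈ c, e ∈ F) ∧ src (c.head hc) = x ∧
    c.length = m with hP
  have hP1 : P 1 := ⟨[e₀], by simp, by simp, by simp [List.Chain'], by simpa using he₀, by simpa using hsrc, rfl⟩
  have hcard : 1 ≤ Fintype.card E := Fintype.card_pos_iff.mpr ⟨e₀⟩
  have hPM : P (Nat.findGreatest P (Fintype.card E)) :=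
    Nat.findGreatest_spec hcard hP1
  set M := Nat.findGreatest P (Fintype.card E) with hM
  obtain ⟨c, hc, hnd, hch, hcF, hhead, hlen⟩ := hPM
  refine ⟨c, hc, hnd, hch, hcF, hhead, ?_⟩
  by_contra hne
  set y := tgt (c.getLast hc) with hy
  -- no extension possible
  have hext : ∀ e ∈ F, src e = y → e ∈ c := by
    intro e heF hes
    by_contra hec
    have hPM1 : P (M + 1) := by
      refine ⟨c ++ [e], by simp, ?_, ?_, ?_, ?_, by simp [hlen]⟩
      · simp [List.nodup_append, hnd, hec]; rintro a ha rfl; exact hec ha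
      · rw [List.Chain', List.isChain_append]
        refine ⟨hch, by simp, ?_⟩
        intro a ha b hb
        simp only [List.head?_cons, Option.mem_def, Option.some.injEq] at hb
        rw [List.getLast?_eq_getLast hc] at ha
        simp only [Option.mem_def, Option.some.injEq] at ha
        subst ha; subst hb
        rw [hy] at hes; exact hes.symm
      · intro f hf
        rcases List.mem_append.mp hf with h | h
        · exact hcF f h
        · simp only [List.mem_singleton] at h; subst h; exact heF
      · rw [List.head_append_of_ne_nil hc]  -- name guess
        exact hhead
    have hle : M + 1 ≤ Fintype.card E := by
      obtain ⟨c', hc', hnd', _, _, _, hlen'⟩ := hPM1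
      rw [← hlen']; exact hnd'.length_le_card
    exact absurd hPM1 (Nat.findGreatest_is_greatest (Nat.lt_succ_self M) hle)
  -- counts
  have hkey := count_key src tgt c hch hc y
  rw [hhead] at hkey
  have hxy : (if x = y then 1 else 0) = 0 := by
    simp only [ite_eq_right_iff]
    intro hxe; exact absurd hxe.symm hne
  have hyy : (if tgt (c.getLast hc) = y then 1 else 0) = 1 := by simp [← hy]
  rw [hxy, hyy] at hkey
  have h2 : c.countP (fun e => decide (tgt e = y)) ≤ (F.filter (fun e => tgt e = y)).card :=
    countP_le c hnd F hcF _
  have h3 : (F.filter (fun e => src e = y)).card ≤ c.countP (fun e => decide (src e = y)) :=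
    card_le_countP c F _ hext
  have := hbal y
  omega


theorem get_idx (l : List E) {i j : ℕ} (hi : i < l.length) (hj : j < l.length) (h : i = j) :
    l.get ⟨i, hi⟩ = l.get ⟨j, hj⟩ := by subst h; rfl

theorem CT_nil : CT src tgt [] := ⟨List.nodup_nil, fun i j hi => absurd hi (by simp)⟩

theorem CT_of_linear (c : List E) (hc : c ≠ []) (hnd : c.Nodup)
    (hch : c.Chain' (fun e f => tgt e = src f))
    (hcl : tgt (c.getLast hc) = src (c.head hc)) : CT src tgt c := by
  refine ⟨hnd, fun i j hi hj hij => ?_⟩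
  rcases Nat.lt_or_ge (i + 1) c.length with h' | h'
  · have : j = i + 1 := by rw [hij]; exact Nat.mod_eq_of_lt h'
    subst this
    exact List.isChain_iff_getElem.mp hch i (by omega)
  · have hi' : i = c.length - 1 := by omega
    have hj' : j = 0 := by rw [hij]; have : i + 1 = c.length := by omega
                           simp [this]
    have hlast : c.get ⟨i, hi⟩ = c.getLast hc := by
      rw [List.getLast_eq_getElem]; exact get_idx c hi (by omega) hi'
    have hhead : c.get ⟨j, hj⟩ = c.head hc := by
      rw [← List.get_mk_zero (by omega : 0 < c.length)]
      exact get_idx c hj (by omega) hj'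
    rw [hlast, hhead, hcl]

theorem CT_wrap (c : List E) (hc : c ≠ []) (hct : CT src tgt c) :
    tgt (c.getLast hc) = src (c.head hc) := by
  have hlen : 0 < c.length := List.length_pos_iff.mpr hc
  have h0 : 0 = (c.length - 1 + 1) % c.length := by
    have : c.length - 1 + 1 = c.length := by omega
    simp [this]
  have := hct.2 (c.length - 1) 0 (by omega) hlen h0
  rw [List.getLast_eq_getElem, ← List.get_mk_zero hlen]
  exact this

theorem CT_chain' (c : List E) (hct : CT src tgt c) :
    c.Chain' (fun e f => tgt e = src f) := by
  rw [List.Chain', List.isChain_iff_getElem]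
  intro i h
  exact hct.2 i (i+1) (by omega) (by omega) (Nat.mod_eq_of_lt (by omega)).symm

theorem CT_countP (c : List E) (hct : CT src tgt c) (v : V) :
    c.countP (fun e => decide (src e = v)) = c.countP (fun e => decide (tgt e = v)) := by
  rcases eq_or_ne c [] with rfl | hc
  · simp
  · have hkey := count_key src tgt c (CT_chain' src tgt c hct) hc v
    have hw := CT_wrap src tgt c hc hct
    rw [hw] at hkey
    omega

theorem CT_rotate (c : List E) (hct : CT src tgt c) (m : ℕ) : CT src tgt (c.rotate m) := by
  refine ⟨(List.nodup_rotate).mpr hct.1, fun i j hi hj hij => ?_⟩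
  have hlen : (c.rotate m).length = c.length := List.length_rotate c m
  rw [hlen] at hi hj
  rw [List.get_rotate, List.get_rotate]
  refine hct.2 ((i + m) % c.length) ((j + m) % c.length) (Nat.mod_lt _ (by omega))
    (Nat.mod_lt _ (by omega)) ?_
  rw [hij, hlen]
  simp only [Nat.mod_add_mod]
  congr 1
  omega

theorem CT_append (c c₁ : List E) (hc : c ≠ []) (hc₁ : c₁ ≠ [])
    (hct : CT src tgt c) (hct₁ : CT src tgt c₁)
    (hdisj : ∀ e ∈ c₁, e ∉ c)
    (hj : tgt (c.getLast hc) = tgt (c₁.getLast hc₁)) : CT src tgt (c ++ c₁) := by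
  have hl : 0 < c.length := List.length_pos_iff.mpr hc
  have hl₁ : 0 < c₁.length := List.length_pos_iff.mpr hc₁
  have hndup : (c ++ c₁).Nodup := by
    rw [List.nodup_append]
    exact ⟨hct.1, hct₁.1, fun a ha b hb hab => hdisj b hb (hab ▸ ha)⟩
  have hw : tgt (c.getLast hc) = src (c.head hc) := CT_wrap src tgt c hc hct
  have hw₁ : tgt (c₁.getLast hc₁) = src (c₁.head hc₁) := CT_wrap src tgt c₁ hc₁ hct₁
  have hLen : (c ++ c₁).length = c.length + c₁.length := List.length_append
  have hgetc : ∀ (i : ℕ) (h : i < c.length), (c ++ c₁).get ⟨i, by omega⟩ = c.get ⟨i, h⟩ :=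
    fun i h => List.getElem_append_left h
  have hgetc₁ : ∀ (i : ℕ) (h : c.length ≤ i) (h2 : i < c.length + c₁.length),
      (c ++ c₁).get ⟨i, by omega⟩ = c₁.get ⟨i - c.length, by omega⟩ := by
    intro i h h2
    exact List.getElem_append_right h
  have hlastc : c.getLast hc = c.get ⟨c.length - 1, by omega⟩ := List.getLast_eq_getElem hc
  have hlastc₁ : c₁.getLast hc₁ = c₁.get ⟨c₁.length - 1, by omega⟩ := List.getLast_eq_getElem hc₁
  have hheadc : c.head hc = c.get ⟨0, hl⟩ := (List.get_mk_zero hl).symm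
  have hheadc₁ : c₁.head hc₁ = c₁.get ⟨0, hl₁⟩ := (List.get_mk_zero hl₁).symm
  refine ⟨hndup, fun i j hi hj' hij => ?_⟩
  rw [hLen] at hi hj' hij
  rcases Nat.lt_or_ge (i + 1) c.length with h1 | h1
  · -- i, i+1 inside c
    have hjv : j = i + 1 := by rw [hij]; exact Nat.mod_eq_of_lt (by omega)
    subst hjv
    rw [hgetc i (by omega), hgetc (i+1) h1]
    exact hct.2 i (i+1) (by omega) h1 (Nat.mod_eq_of_lt h1).symm
  · rcases Nat.lt_or_ge i c.length with h2 | h2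
    · -- i = c.length - 1, j = c.length : last of c -> head of c₁
      have hiv : i = c.length - 1 := by omega
      have hjv : j = c.length := by
        have hlt : (i + 1) % (c.length + c₁.length) = i + 1 := Nat.mod_eq_of_lt (by omega)
        rw [hij, hlt]; omega
      subst hjv
      rw [hgetc i h2, hgetc₁ c.length (le_refl _) (by omega)]
      have e1 : c.get ⟨i, h2⟩ = c.getLast hc := by rw [hlastc]; exact get_idx c h2 (by omega) hiv
      have e2 : c₁.get ⟨c.length - c.length, by omega⟩ = c₁.head hc₁ := by
        rw [hheadc₁]; exact get_idx c₁ (by omega) hl₁ (by omega)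
      rw [e1, e2, ← hw₁, hj]
    · -- i inside c₁
      rcases Nat.lt_or_ge (i + 1) (c.length + c₁.length) with h3 | h3
      · -- within c₁ (not wrapping)
        have hjv : j = i + 1 := by rw [hij]; exact Nat.mod_eq_of_lt (by omega)
        subst hjv
        rw [hgetc₁ i h2 (by omega), hgetc₁ (i+1) (by omega) (by omega)]
        refine hct₁.2 _ _ (by omega) (by omega) ?_
        have : i + 1 - c.length = (i - c.length) + 1 := by omega
        rw [this, Nat.mod_eq_of_lt (by omega)]
      · -- wrap: last of c₁ -> head of c
        have hiv : i = c.length + c₁.length - 1 := by omega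
        have hjv : j = 0 := by
          rw [hij]; have : i + 1 = c.length + c₁.length := by omega
          simp [this]
        subst hjv
        rw [hgetc₁ i h2 (by omega), hgetc 0 hl]
        have e1 : c₁.get ⟨i - c.length, by omega⟩ = c₁.getLast hc₁ := by
          rw [hlastc₁]; exact get_idx c₁ (by omega) (by omega) (by omega)
        have e2 : c.get ⟨0, hl⟩ = c.head hc := by rw [hheadc]
        rw [e1, e2, hw₁, ← hw₁, ← hj, hw]

theorem find_attach (c : List E) (hc : c ≠ []) (f : E) (hf : f ∉ c)
    (hreach : Relation.ReflTransGen (Step src tgt)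
      (tgt (c.get ⟨0, List.length_pos_iff.mpr hc⟩)) (src f)) :
    ∃ g, g ∉ c ∧ ∃ (i : ℕ) (h : i < c.length), src g = tgt (c.get ⟨i, h⟩) := by
  set Q : V → Prop := fun w =>
    (∃ (i : ℕ) (h : i < c.length), tgt (c.get ⟨i, h⟩) = w) ∨
    (∃ g, g ∉ c ∧ ∃ (i : ℕ) (h : i < c.length), src g = tgt (c.get ⟨i, h⟩)) with hQ
  have hQstart : Q (tgt (c.get ⟨0, List.length_pos_iff.mpr hc⟩)) :=
    Or.inl ⟨0, List.length_pos_iff.mpr hc, rfl⟩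
  have key : ∀ w, Relation.ReflTransGen (Step src tgt)
      (tgt (c.get ⟨0, List.length_pos_iff.mpr hc⟩)) w → Q w := by
    intro w hw
    induction hw with
    | refl => exact Or.inl ⟨0, List.length_pos_iff.mpr hc, rfl⟩
    | tail hr hstep ih =>
      rcases ih with ⟨i, h, hw⟩ | hdone
      · obtain ⟨e, hes, het⟩ := hstep
        by_cases hec : e ∈ c
        · obtain ⟨⟨i', h'⟩, hge⟩ := List.mem_iff_get.mp hec
          exact Or.inl ⟨i', h', by rw [hge, het]⟩
        · exact Or.inr ⟨e, hec, i, h, by rw [hes, hw]⟩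
      · exact Or.inr hdone
  rcases key (src f) hreach with ⟨i, h, hw⟩ | hdone
  · exact ⟨f, hf, i, h, hw.symm⟩
  · exact hdone

theorem euler (hbal : ∀ v : V, ((Finset.univ.filter (fun e => src e = v)).card
      = (Finset.univ.filter (fun e => tgt e = v)).card))
    (hconn : ∀ u w : V, Relation.ReflTransGen (Step src tgt) u w)
    (hE : Nonempty E) :
    ∃ c : List E, c.Nodup ∧ (∀ e : E, e ∈ c) ∧ CT src tgt c := by
  classical
  set P : ℕ → Prop := fun m => ∃ c : List E, CT src tgt c ∧ c.length = m with hP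
  have hP0 : P 0 := ⟨[], CT_nil src tgt, rfl⟩
  have hPM : P (Nat.findGreatest P (Fintype.card E)) :=
    Nat.findGreatest_spec (Nat.zero_le _) hP0
  set M := Nat.findGreatest P (Fintype.card E) with hM
  obtain ⟨c, hct, hlen⟩ := hPM
  refine ⟨c, hct.1, ?_, hct⟩
  by_contra hnotall
  push_neg at hnotall
  obtain ⟨f, hf⟩ := hnotall
  -- the complement finset is balanced
  set F : Finset E := Finset.univ \ c.toFinset with hF
  have hsplit : ∀ (p : E → Prop) (hp : DecidablePred p),
      (F.filter p).card + (c.toFinset.filter p).card = (Finset.univ.filter p).card := by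
    intro p hp
    have hdis : Disjoint (F.filter p) (c.toFinset.filter p) := by
      rw [Finset.disjoint_left]
      intro e he1 he2
      rw [Finset.mem_filter, hF, Finset.mem_sdiff] at he1
      exact he1.1.2 (Finset.mem_filter.mp he2).1
    rw [← Finset.card_union_of_disjoint hdis]
    congr 1
    ext e
    simp only [Finset.mem_union, Finset.mem_filter, hF, Finset.mem_sdiff, Finset.mem_univ,
      true_and]
    tauto
  have hcnt : ∀ (p : E → Prop) (hp : DecidablePred p),
      (c.toFinset.filter p).card = c.countP (fun e => decide (p e)) := by
    intro p hp
    rw [List.countP_eq_length_filter]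
    have : c.toFinset.filter p = (c.filter (fun e => decide (p e))).toFinset := by
      ext e
      simp [List.mem_toFinset, List.mem_filter]
    rw [this, List.toFinset_card_of_nodup (hct.1.filter _)]
  have hbalF : ∀ v, (F.filter (fun e => src e = v)).card
      = (F.filter (fun e => tgt e = v)).card := by
    intro v
    have h1 := hsplit (fun e => src e = v) (by infer_instance)
    have h2 := hsplit (fun e => tgt e = v) (by infer_instance)
    have h3 := hcnt (fun e => src e = v) (by infer_instance)
    have h4 := hcnt (fun e => tgt e = v) (by infer_instance)
    have h5 := CT_countP src tgt c hct v
    have h6 := hbal v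
    omega
  -- find a starting point and a closed trail in F, then splice
  rcases eq_or_ne c [] with rfl | hc
  · -- empty maximal trail, but there is an edge: contradiction
    obtain ⟨c₁, hc₁, hnd₁, hch₁, hcF₁, hhead₁, hlast₁⟩ :=
      exists_closed_from src tgt F hbalF (src f) f (by simp [hF]) rfl
    have : P c₁.length := ⟨c₁, CT_of_linear src tgt c₁ hc₁ hnd₁ hch₁ (by rw [hlast₁, hhead₁]), rfl⟩
    have hgt : M < c₁.length := by
      have hM0 : M = 0 := by simpa using hlen.symm
      have := List.length_pos_iff.mpr hc₁
      omega
    exact absurd this (Nat.findGreatest_is_greatest hgt hnd₁.length_le_card)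
  · -- nonempty maximal trail: find attachment point, splice
    obtain ⟨g, hg, i, hi, hgi⟩ := find_attach src tgt c hc f hf (hconn _ _)
    obtain ⟨c₁, hc₁, hnd₁, hch₁, hcF₁, hhead₁, hlast₁⟩ :=
      exists_closed_from src tgt F hbalF (src g) g (by simp [hF, hg]) rfl
    have hct₁ : CT src tgt c₁ :=
      CT_of_linear src tgt c₁ hc₁ hnd₁ hch₁ (by rw [hlast₁, hhead₁])
    -- rotate c so that it ends at position i
    set c' : List E := c.rotate ((i + 1) % c.length) with hc'
    have hc'ne : c' ≠ [] := by
      rw [hc', ← List.length_pos_iff, List.length_rotate]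
      exact List.length_pos_iff.mpr hc
    have hct' : CT src tgt c' := CT_rotate src tgt c hct _
    have hlen' : c'.length = c.length := List.length_rotate c _
    have hlast' : c'.getLast hc'ne = c.get ⟨i, hi⟩ := by
      have h1 : c'.getLast hc'ne = c'.get ⟨c'.length - 1,
          by have := List.length_pos_iff.mpr hc'ne; omega⟩ := List.getLast_eq_getElem hc'ne
      rw [h1, List.get_rotate]
      refine get_idx c _ hi ?_
      show (c'.length - 1 + (i + 1) % c.length) % c.length = i
      rw [hlen', Nat.add_mod_mod,
        (by have := List.length_pos_iff.mpr hc; omega : c.length - 1 + (i + 1) = c.length + i),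
        Nat.add_mod_left, Nat.mod_eq_of_lt hi]
    have hdisj : ∀ e ∈ c₁, e ∉ c' := by
      intro e he hec'
      have : e ∈ c := (List.mem_rotate (l := c) (a := e) (n := (i + 1) % c.length)).mp hec'
      have heF := hcF₁ e he
      rw [hF, Finset.mem_sdiff] at heF
      exact heF.2 (List.mem_toFinset.mpr this)
    have hjoin : tgt (c'.getLast hc'ne) = tgt (c₁.getLast hc₁) := by
      rw [hlast', hlast₁, hgi]
    have hctnew : CT src tgt (c' ++ c₁) :=
      CT_append src tgt c' c₁ hc'ne hc₁ hct' hct₁ hdisj hjoin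
    have hPnew : P (c' ++ c₁).length := ⟨c' ++ c₁, hctnew, rfl⟩
    have hgt : M < (c' ++ c₁).length := by
      rw [List.length_append, hlen', hlen]
      have := List.length_pos_iff.mpr hc₁
      omega
    exact absurd hPnew (Nat.findGreatest_is_greatest hgt hctnew.1.length_le_card)

end


variable {a k t : ℕ}

abbrev AE (a k t : ℕ) : Type := (Fin (k+1) → Fin a) × ZMod t
abbrev AV (a k t : ℕ) : Type := (Fin k → Fin a) × ZMod t

def asrc : AE a k t → AV a k t := fun e => (fun i => e.1 i.castSucc, e.2)
def atgt : AE a k t → AV a k t := fun e => (fun i => e.1 i.succ, e.2 + 1)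

theorem asrc_mk (w : Fin (k+1) → Fin a) (s : ZMod t) :
    asrc (w, s) = ((fun i => w i.castSucc : Fin k → Fin a), s) := rfl
theorem atgt_mk (w : Fin (k+1) → Fin a) (s : ZMod t) :
    atgt (w, s) = ((fun i => w i.succ : Fin k → Fin a), s + 1) := rfl

theorem asrc_snoc (u : Fin k → Fin a) (y : Fin a) (s : ZMod t) :
    asrc (Fin.snoc u y, s) = (u, s) := by
  have h : (fun i : Fin k => (Fin.snoc u y : Fin (k+1) → Fin a) i.castSucc) = u :=
    funext fun i => by simp
  rw [asrc_mk, h]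

theorem atgt_cons (u : Fin k → Fin a) (y : Fin a) (s : ZMod t) :
    atgt (Fin.cons y u, s) = (u, s + 1) := by
  have h : (fun i : Fin k => (Fin.cons y u : Fin (k+1) → Fin a) i.succ) = u :=
    funext fun i => by simp
  rw [atgt_mk, h]

theorem snoc_eta (w : Fin (k+1) → Fin a) :
    (Fin.snoc (fun i : Fin k => w i.castSucc) (w (Fin.last k)) : Fin (k+1) → Fin a) = w := by
  funext i
  induction i using Fin.lastCases with
  | last => exact Fin.snoc_last _ _
  | cast j => rw [Fin.snoc_castSucc]

theorem cons_eta (w : Fin (k+1) → Fin a) :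
    (Fin.cons (w 0) (fun i : Fin k => w i.succ) : Fin (k+1) → Fin a) = w := by
  funext i
  induction i using Fin.cases with
  | zero => exact Fin.cons_zero _ _
  | succ j => rw [Fin.cons_succ]

def outEquiv (v : AV a k t) : {e : AE a k t // asrc e = v} ≃ Fin a where
  toFun e := e.1.1 (Fin.last k)
  invFun y := ⟨(Fin.snoc v.1 y, v.2), asrc_snoc v.1 y v.2⟩
  left_inv := by
    rintro ⟨⟨w, s⟩, he⟩
    rw [asrc_mk] at he
    have h1 : (fun i : Fin k => w i.castSucc) = v.1 := congrArg Prod.fst he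
    have h2 : s = v.2 := congrArg Prod.snd he
    apply Subtype.ext
    show ((Fin.snoc v.1 (w (Fin.last k)) : Fin (k+1) → Fin a), v.2) = (w, s)
    rw [← h1, ← h2, snoc_eta]
  right_inv y := by
    show (Fin.snoc v.1 y : Fin (k+1) → Fin a) (Fin.last k) = y
    exact Fin.snoc_last _ _

def inEquiv (v : AV a k t) : {e : AE a k t // atgt e = v} ≃ Fin a where
  toFun e := e.1.1 0
  invFun y := ⟨(Fin.cons y v.1, v.2 - 1), by
    have h : v.2 - 1 + 1 = v.2 := by ring
    rw [atgt_cons, h]⟩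
  left_inv := by
    rintro ⟨⟨w, s⟩, he⟩
    rw [atgt_mk] at he
    have h1 : (fun i : Fin k => w i.succ) = v.1 := congrArg Prod.fst he
    have h2 : s + 1 = v.2 := congrArg Prod.snd he
    have h3 : v.2 - 1 = s := by rw [← h2]; ring
    apply Subtype.ext
    show ((Fin.cons (w 0) v.1 : Fin (k+1) → Fin a), v.2 - 1) = (w, s)
    rw [← h1, h3, cons_eta]
  right_inv y := by
    show (Fin.cons y v.1 : Fin (k+1) → Fin a) 0 = y
    exact Fin.cons_zero _ _

variable [NeZero t]

theorem abal (v : AV a k t) :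
    (Finset.univ.filter (fun e : AE a k t => asrc e = v)).card
      = (Finset.univ.filter (fun e : AE a k t => atgt e = v)).card := by
  rw [← Fintype.card_subtype, ← Fintype.card_subtype,
    Fintype.card_congr (outEquiv v), Fintype.card_congr (inEquiv v)]


def Step' : AV a k t → AV a k t → Prop := Step asrc atgt

def feed (u : Fin k → Fin a) (y : Fin a) : Fin k → Fin a :=
  fun i => (Fin.snoc u y : Fin (k+1) → Fin a) i.succ

theorem step_feed (u : Fin k → Fin a) (y : Fin a) (s : ZMod t) :
    Step' (u, s) ((feed u y : Fin k → Fin a), s + 1) :=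
  ⟨(Fin.snoc u y, s), asrc_snoc u y s, rfl⟩

theorem reach_word (w : Fin k → Fin a) : ∀ (m : ℕ), m ≤ k →
    ∀ (u : Fin k → Fin a) (s : ZMod t),
    (∀ i : Fin k, (h : m ≤ (i : ℕ)) → u i = w ⟨(i : ℕ) - m, by omega⟩) →
    Relation.ReflTransGen (Step' (a := a) (k := k) (t := t)) (u, s) (w, s + (m : ℕ)) := by
  intro m
  induction m with
  | zero =>
    intro _ u s hu
    have huw : u = w := by
      funext i
      have := hu i (Nat.zero_le _)
      rwa [show (⟨(i : ℕ) - 0, by omega⟩ : Fin k) = i from Fin.ext (by simp)] at this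
    rw [huw, show ((0 : ℕ) : ZMod t) = 0 from Nat.cast_zero, add_zero]
  | succ m ih =>
    intro hm u s hu
    set y : Fin a := w ⟨k - (m + 1), by omega⟩ with hy
    have hprop : ∀ i : Fin k, (h : m ≤ (i : ℕ)) → feed u y i = w ⟨(i : ℕ) - m, by omega⟩ := by
      intro i hi
      show (Fin.snoc u y : Fin (k+1) → Fin a) i.succ = _
      rcases Nat.lt_or_ge ((i : ℕ) + 1) k with h' | h'
      · have hsc : (i.succ : Fin (k+1)) = Fin.castSucc ⟨(i : ℕ) + 1, h'⟩ := Fin.ext (by simp)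
        rw [hsc, Fin.snoc_castSucc]
        have h2 := hu ⟨(i : ℕ) + 1, h'⟩ (by simp only [Fin.val_mk]; omega)
        rw [h2]
        exact congrArg w (Fin.ext (by simp only [Fin.val_mk]; omega))
      · have hik : (i : ℕ) + 1 = k := by have := i.isLt; omega
        have hsc : (i.succ : Fin (k+1)) = Fin.last k := Fin.ext (by simp [hik])
        rw [hsc, Fin.snoc_last, hy]
        exact congrArg w (Fin.ext (by simp only [Fin.val_mk]; omega))
    have hstep := step_feed u y s
    have hrest := ih (by omega) (feed u y) (s + 1) hprop
    have hcast : s + ((m + 1 : ℕ) : ZMod t) = s + 1 + (m : ℕ) := by push_cast; ring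
    rw [hcast]
    exact Relation.ReflTransGen.head hstep hrest

theorem reach_any (u w : Fin k → Fin a) (s : ZMod t) :
    Relation.ReflTransGen (Step' (a := a) (k := k) (t := t)) (u, s) (w, s + (k : ℕ)) :=
  reach_word w k le_rfl u s (fun i hi => absurd i.isLt (by omega))

theorem loop_k1 (ha : 0 < a) (w : Fin k → Fin a) (r : ZMod t) :
    Relation.ReflTransGen (Step' (a := a) (k := k) (t := t)) (w, r) (w, r + (k : ℕ) + 1) := by
  have h : r + (k : ℕ) + 1 = r + 1 + (k : ℕ) := by ring
  rw [h]
  exact Relation.ReflTransGen.head (step_feed w ⟨0, ha⟩ r) (reach_any _ w (r + 1))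

theorem iter_k (w : Fin k → Fin a) (r : ZMod t) : ∀ α : ℕ,
    Relation.ReflTransGen (Step' (a := a) (k := k) (t := t)) (w, r) (w, r + ((α * k : ℕ) : ZMod t)) := by
  intro α
  induction α with
  | zero => simpa using Relation.ReflTransGen.refl
  | succ α ih =>
    have h2 := reach_any w w (r + ((α * k : ℕ) : ZMod t))
    have hc : r + ((α * k : ℕ) : ZMod t) + (k : ℕ) = r + (((α + 1) * k : ℕ) : ZMod t) := by
      push_cast; ring
    rw [hc] at h2
    exact ih.trans h2

theorem iter_k1 (ha : 0 < a) (w : Fin k → Fin a) (r : ZMod t) : ∀ β : ℕ,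
    Relation.ReflTransGen (Step' (a := a) (k := k) (t := t)) (w, r)
      (w, r + ((β * (k + 1) : ℕ) : ZMod t)) := by
  intro β
  induction β with
  | zero => simpa using Relation.ReflTransGen.refl
  | succ β ih =>
    have h2 := loop_k1 ha w (r + ((β * (k + 1) : ℕ) : ZMod t))
    have hc : r + ((β * (k + 1) : ℕ) : ZMod t) + (k : ℕ) + 1
        = r + (((β + 1) * (k + 1) : ℕ) : ZMod t) := by push_cast; ring
    rw [hc] at h2
    exact ih.trans h2

theorem aconn (ha : 0 < a) (ht : 0 < t) (p q : AV a k t) :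
    Relation.ReflTransGen (Step' (a := a) (k := k) (t := t)) p q := by
  obtain ⟨u, s⟩ := p
  obtain ⟨w, s'⟩ := q
  set r : ZMod t := s + (k : ℕ) with hr
  set δ : ZMod t := s' - r with hδ
  set β : ℕ := δ.val with hβ
  have hβt : β < t := ZMod.val_lt δ
  set α : ℕ := t - β with hα
  have h1 := reach_any (t := t) u w s
  have h2 := iter_k (t := t) w r α
  have h3 := iter_k1 (t := t) ha w (r + ((α * k : ℕ) : ZMod t)) β
  have hfin : r + ((α * k : ℕ) : ZMod t) + ((β * (k + 1) : ℕ) : ZMod t) = s' := by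
    have hab : ((α : ZMod t) + (β : ZMod t)) = 0 := by
      rw [← Nat.cast_add, show α + β = t by omega, ZMod.natCast_self]
    have hval : ((β : ℕ) : ZMod t) = δ := ZMod.natCast_rightInverse δ
    have : ((α * k : ℕ) : ZMod t) + ((β * (k + 1) : ℕ) : ZMod t) = δ := by
      push_cast
      calc (α : ZMod t) * k + (β : ZMod t) * ((k : ZMod t) + 1)
          = ((α : ZMod t) + (β : ZMod t)) * k + β := by ring
        _ = δ := by rw [hab, zero_mul, zero_add]; exact_mod_cast hval
    rw [add_assoc, this, hδ]
    ring
  rw [← hfin]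
  exact (h1.trans h2).trans h3


theorem main_assembly (a k t : ℕ) (ha : 0 < a) (ht : 0 < t) :
    ∃ v : ℕ → Fin a,
      (∀ i, v (i + t * a ^ (k+1)) = v i) ∧
      ∀ j : Fin t, ∀ w : Fin (k+1) → Fin a,
        ∃! i : Fin (t * a ^ (k+1)), (i : ℕ) % t = (j : ℕ) ∧
          ∀ m : Fin (k+1), v ((i : ℕ) + (m : ℕ)) = w m := by
  haveI : NeZero t := ⟨ht.ne'⟩
  have hE : Nonempty (AE a k t) := ⟨(fun _ => ⟨0, ha⟩, 0)⟩
  obtain ⟨c, hnd, hall, hct⟩ := euler asrc atgt abal (aconn ha ht) hE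
  have hcard : Fintype.card (AE a k t) = t * a ^ (k+1) := by
    rw [Fintype.card_prod, ZMod.card, Fintype.card_fun, Fintype.card_fin, Fintype.card_fin]
    ring
  have hlen : c.length = t * a ^ (k+1) := by
    rw [← hcard, ← List.toFinset_card_of_nodup hnd]
    have huniv : c.toFinset = Finset.univ :=
      Finset.eq_univ_iff_forall.mpr (fun e => List.mem_toFinset.mpr (hall e))
    rw [huniv, Finset.card_univ]
  have hpos : 0 < c.length := by
    rw [hlen]; positivity
  set ρ : ℕ → AE a k t := fun i => c.get ⟨i % c.length, Nat.mod_lt _ hpos⟩ with hρ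
  have hρlt : ∀ (i : ℕ) (h : i < c.length), ρ i = c.get ⟨i, h⟩ := by
    intro i h
    exact get_idx c _ h (Nat.mod_eq_of_lt h)
  have hadj : ∀ i : ℕ, atgt (ρ i) = asrc (ρ (i+1)) := by
    intro i
    exact hct.2 (i % c.length) ((i+1) % c.length) (Nat.mod_lt _ hpos) (Nat.mod_lt _ hpos)
      (by rw [Nat.mod_add_mod])
  have hperiod : ∀ i : ℕ, ρ (i + t * a ^ (k+1)) = ρ i := by
    intro i
    rw [hρ]
    refine get_idx c _ _ ?_
    rw [← hlen, Nat.add_mod_right]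
  have hsnd : ∀ i : ℕ, (ρ i).2 = (ρ 0).2 + (i : ZMod t) := by
    intro i
    induction i with
    | zero => simp
    | succ i ih =>
      have h1 : (ρ (i+1)).2 = (ρ i).2 + 1 := (congrArg Prod.snd (hadj i)).symm
      rw [h1, ih]
      push_cast
      ring
  have hfst : ∀ (m : ℕ) (hm : m ≤ k) (i : ℕ),
      (ρ i).1 ⟨m, by omega⟩ = (ρ (i + m)).1 ⟨0, by omega⟩ := by
    intro m
    induction m with
    | zero => intro _ i; rfl
    | succ m ih =>
      intro hm i
      have h1 : (fun j : Fin k => (ρ i).1 j.succ) = (fun j : Fin k => (ρ (i+1)).1 j.castSucc) :=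
        congrArg Prod.fst (hadj i)
      have h2 := congrFun h1 ⟨m, by omega⟩
      have h3 : ((⟨m, by omega⟩ : Fin k).succ : Fin (k+1)) = ⟨m + 1, by omega⟩ :=
        Fin.ext (by simp)
      have h4 : ((⟨m, by omega⟩ : Fin k).castSucc : Fin (k+1)) = ⟨m, by omega⟩ :=
        Fin.ext (by simp)
      rw [h3, h4] at h2
      rw [h2, ih (by omega) (i+1)]
      have : i + 1 + m = i + (m + 1) := by omega
      rw [this]
  have huniq : ∀ e : AE a k t, ∃! i : Fin c.length, c.get i = e := by
    intro e
    obtain ⟨i, hi⟩ := List.mem_iff_get.mp (hall e)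
    exact ⟨i, hi, fun i' hi' => (List.Nodup.get_inj_iff hnd).mp (hi'.trans hi.symm)⟩
  refine ⟨fun i => (ρ i).1 ⟨0, by omega⟩, fun i => ?_, ?_⟩
  · show (ρ (i + t * a ^ (k+1))).1 ⟨0, by omega⟩ = (ρ i).1 ⟨0, by omega⟩
    rw [hperiod i]
  intro j w
  obtain ⟨i0, hi0, hu0⟩ := huniq (w, (ρ 0).2 + ((j : ℕ) : ZMod t))
  have hρi0 : ρ (i0 : ℕ) = (w, (ρ 0).2 + ((j : ℕ) : ZMod t)) := by
    rw [hρlt _ i0.isLt]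
    exact hi0
  have hmod0 : (i0 : ℕ) % t = (j : ℕ) := by
    have h1 : (ρ 0).2 + ((i0 : ℕ) : ZMod t) = (ρ 0).2 + ((j : ℕ) : ZMod t) := by
      rw [← hsnd (i0 : ℕ), hρi0]
    have h2 : (((i0 : ℕ) : ℕ) : ZMod t) = ((j : ℕ) : ZMod t) := add_left_cancel h1
    have h3 : (i0 : ℕ) ≡ (j : ℕ) [MOD t] := (ZMod.natCast_eq_natCast_iff _ _ _).mp h2
    rw [Nat.ModEq] at h3
    rw [h3, Nat.mod_eq_of_lt j.isLt]
  refine ⟨⟨(i0 : ℕ), by rw [← hlen]; exact i0.isLt⟩, ⟨hmod0, ?_⟩, ?_⟩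
  · intro m
    show (ρ ((i0 : ℕ) + (m : ℕ))).1 ⟨0, by omega⟩ = w m
    rw [← hfst (m : ℕ) (by omega) (i0 : ℕ), hρi0]
  · rintro i' ⟨hmod', hwin'⟩
    have hi'lt : (i' : ℕ) < c.length := by rw [hlen]; exact i'.isLt
    have hρi' : ρ (i' : ℕ) = (w, (ρ 0).2 + ((j : ℕ) : ZMod t)) := by
      refine Prod.ext ?_ ?_
      · funext m
        have hm : (⟨(m : ℕ), by omega⟩ : Fin (k+1)) = m := Fin.ext rfl
        rw [← hm, hfst (m : ℕ) (by omega) (i' : ℕ)]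
        exact hwin' m
      · rw [hsnd (i' : ℕ)]
        have h3 : ((i' : ℕ) : ZMod t) = ((j : ℕ) : ZMod t) := by
          refine (ZMod.natCast_eq_natCast_iff _ _ _).mpr ?_
          rw [Nat.ModEq, hmod', Nat.mod_eq_of_lt j.isLt]
        rw [h3]
    have hgeti' : c.get ⟨(i' : ℕ), hi'lt⟩ = (w, (ρ 0).2 + ((j : ℕ) : ZMod t)) := by
      rw [← hρlt _ hi'lt]
      exact hρi'
    have := hu0 ⟨(i' : ℕ), hi'lt⟩ hgeti'
    have hval : (i' : ℕ) = (i0 : ℕ) := congrArg Fin.val this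
    exact Fin.ext hval

end PN

/-- `v`, viewed as a cyclic word of length `t * a ^ n` (a periodic function `ℕ → Fin a`),
is an `(a, n, t)`-perfect necklace. -/
def IsPerfectNecklace (a n t : ℕ) (v : ℕ → Fin a) : Prop :=
  (∀ i, v (i + t * a ^ n) = v i) ∧
  ∀ j : Fin t, ∀ w : Fin n → Fin a,
    ∃! i : Fin (t * a ^ n), (i : ℕ) % t = (j : ℕ) ∧
      ∀ m : Fin n, v ((i : ℕ) + (m : ℕ)) = w m

/-- For all positive integers `a`, `n`, `t` there exists an `(a, n, t)`-perfect
necklace. -/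
theorem exists_perfectNecklace (a n t : ℕ) (ha : 0 < a) (hn : 0 < n) (ht : 0 < t) :
    ∃ v : ℕ → Fin a, IsPerfectNecklace a n t v := by
  obtain ⟨k, rfl⟩ : ∃ k, n = k + 1 := ⟨n - 1, by omega⟩
  obtain ⟨v, h1, h2⟩ := PN.main_assembly a k t ha ht
  exact ⟨v, h1, h2⟩
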